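/- arXiv:2007.09429 — 3 statements merged into one kernel-verified Lean document; each statement's English description precedes it below -/
import Mathlib

section
/- Differential relation dH/d(mse) = β (Eq. (20) of the paper, parametrized by β): let n ≥ 1, e : Fin n → ℝ, Q(β) = Σ_j exp(-β e_j²), p_i(β) = exp(-β e_i²)/Q(β), m(β) = Σ_i p_i(β) e_i², and H(β) = -Σ_i p_i(β) ln p_i(β). Then for every β ∈ ℝ, both m and H are differentiable at β and H'(β) = β · m'(β). -/
/-- Differential relation `dH/d(mse) = β` (Eq. (20)), parametrized by `β`:
the Gibbs mean squared error `m` and the Gibbs entropy `H` are differentiable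
at every `β`, and `H' β = β * m' β`. -/
theorem gibbs_entropy_deriv_eq_beta_mul_mse_deriv
    (n : ℕ) (hn : 1 ≤ n) (e : Fin n → ℝ)
    (Q : ℝ → ℝ) (hQ : ∀ β, Q β = ∑ j, Real.exp (-β * (e j) ^ 2))
    (p : ℝ → Fin n → ℝ) (hp : ∀ β i, p β i = Real.exp (-β * (e i) ^ 2) / Q β)
    (m : ℝ → ℝ) (hm : ∀ β, m β = ∑ i, p β i * (e i) ^ 2)
    (H : ℝ → ℝ) (hH : ∀ β, H β = -∑ i, p β i * Real.log (p β i))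
    (β : ℝ) :
    DifferentiableAt ℝ m β ∧ DifferentiableAt ℝ H β ∧
      deriv H β = β * deriv m β := by
  classical
  have hne : Nonempty (Fin n) := Fin.pos_iff_nonempty.mp hn
  have hQpos : ∀ b : ℝ, 0 < Q b := by
    intro b
    rw [hQ]
    exact Finset.sum_pos (fun j _ => Real.exp_pos _) Finset.univ_nonempty
  -- derivative of Q
  have hQder : ∀ b : ℝ, HasDerivAt Q
      (∑ j, Real.exp (-b * (e j) ^ 2) * (-(e j) ^ 2)) b := by
    intro b
    have hQeq : Q = fun b => ∑ j, Real.exp (-b * (e j) ^ 2) := funext hQ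
    rw [hQeq]
    exact HasDerivAt.fun_sum fun j _ => by
      simpa using (((hasDerivAt_id b).neg.mul_const ((e j) ^ 2)).exp)
  -- T function
  set T : ℝ → ℝ := fun b => ∑ j, Real.exp (-b * (e j) ^ 2) * (e j) ^ 2 with hT
  have hTder : ∀ b : ℝ, HasDerivAt T
      (∑ j, Real.exp (-b * (e j) ^ 2) * (-(e j) ^ 2) * (e j) ^ 2) b := by
    intro b
    exact HasDerivAt.fun_sum fun j _ => by
      simpa [mul_comm, mul_assoc, mul_left_comm] using
        ((((hasDerivAt_id b).neg.mul_const ((e j) ^ 2)).exp).mul_const ((e j) ^ 2))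
  have hmeq : m = fun b => T b / Q b := by
    funext b
    rw [hm]
    simp only [hp, hT]
    rw [Finset.sum_div]
    exact Finset.sum_congr rfl fun i _ => by ring
  have hmdiff : DifferentiableAt ℝ m β := by
    rw [hmeq]
    exact ((hTder β).differentiableAt).div ((hQder β).differentiableAt) (hQpos β).ne'
  have hsum1 : ∀ b : ℝ, ∑ i, p b i = 1 := by
    intro b
    simp only [hp]
    rw [← Finset.sum_div, ← hQ, div_self (hQpos b).ne']
  have hHeq : H = fun b => b * m b + Real.log (Q b) := by
    funext b
    rw [hH]
    have hlog : ∀ i, p b i * Real.log (p b i)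
        = -(b * (p b i * (e i) ^ 2)) - p b i * Real.log (Q b) := by
      intro i
      rw [hp, Real.log_div (Real.exp_pos _).ne' (hQpos b).ne', Real.log_exp, ← hp b i]
      ring
    rw [Finset.sum_congr rfl fun i _ => hlog i, Finset.sum_sub_distrib,
      ← Finset.sum_mul, hsum1 b, one_mul]
    have : ∑ i, -(b * (p b i * (e i) ^ 2)) = -(b * m b) := by
      rw [hm, Finset.mul_sum]
      simp
    rw [this]
    ring
  have hQQ : deriv Q β / Q β = -m β := by
    have hdQ : deriv Q β = -(T β) := by
      rw [(hQder β).deriv, hT]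
      simp [mul_neg]
    rw [hdQ, hmeq]
    simp [neg_div]
  have hlogder : HasDerivAt (fun b => Real.log (Q b)) (deriv Q β / Q β) β := by
    rw [(hQder β).deriv]
    exact (hQder β).log (hQpos β).ne'
  have hHder : HasDerivAt H (1 * m β + β * deriv m β + deriv Q β / Q β) β := by
    rw [hHeq]
    exact ((hasDerivAt_id β).mul hmdiff.hasDerivAt).add hlogder
  refine ⟨hmdiff, hHder.differentiableAt, ?_⟩
  rw [hHder.deriv, hQQ]
  ring
end

section
/- Existence and uniqueness of the Lagrange multiplier β solving the prescribed-mean-squared-error equation (Eq. (18) of the paper): let n ≥ 1 and e : Fin n → ℝ be such that the squared errors e_i² are not all equal, and set m(β) = ( Σ_i e_i² exp(-β e_i²) ) / ( Σ_i exp(-β e_i²) ). Then for every target value t with min_i e_i² < t < max_i e_i², there exists a unique β ∈ ℝ such that m(β) = t, equivalently such that t · Σ_i exp(-β e_i²) = Σ_i e_i² exp(-β e_i²). -/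
private lemma gibbs_aux_lower (β x : ℝ) (hβ : β ≤ 0) :
    -|x| ≤ x * Real.exp (-β * x) := by
  rcases le_or_gt 0 x with hx | hx
  · have h1 : 0 ≤ x * Real.exp (-β * x) :=
      mul_nonneg hx (Real.exp_pos _).le
    have h2 : -|x| ≤ 0 := neg_nonpos.mpr (abs_nonneg x)
    linarith
  · have h1 : -β * x ≤ 0 := mul_nonpos_of_nonneg_of_nonpos (by linarith) hx.le
    have h2 : Real.exp (-β * x) ≤ 1 := Real.exp_le_one_iff.mpr h1
    have h3 : Real.exp (-β * x) > 0 := Real.exp_pos _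
    have h4 : x * Real.exp (-β * x) ≥ x := by nlinarith
    rw [abs_of_neg hx]
    linarith

private lemma gibbs_aux_upper (β x : ℝ) (hβ : 0 ≤ β) :
    x * Real.exp (-β * x) ≤ |x| := by
  have := gibbs_aux_lower (-β) (-x) (by linarith)
  have heq : (-x) * Real.exp (-(-β) * (-x)) = -(x * Real.exp (-β * x)) := by
    ring_nf
  rw [heq, abs_neg] at this
  linarith

/-- Existence and uniqueness of the Lagrange multiplier `β` solving the
prescribed-mean-squared-error equation (Eq. (18)): if the squared errors are
not all equal and the target `t` lies strictly between the minimum and the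
maximum of the squared errors, there is a unique `β` with `m β = t`,
equivalently `t * ∑ exp(-β e_i²) = ∑ e_i² exp(-β e_i²)`. -/
theorem gibbs_lagrange_multiplier_existsUnique
    (n : ℕ) (hn : 0 < n) (e : Fin n → ℝ)
    (hne : ∃ i j, (e i) ^ 2 ≠ (e j) ^ 2)
    (m : ℝ → ℝ)
    (hm : ∀ β, m β = (∑ i, (e i) ^ 2 * Real.exp (-β * (e i) ^ 2)) /
                     (∑ i, Real.exp (-β * (e i) ^ 2)))
    (t : ℝ)
    (htmin : Finset.univ.inf' (Finset.univ_nonempty_iff.mpr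
        (Fin.pos_iff_nonempty.mp hn)) (fun i => (e i) ^ 2) < t)
    (htmax : t < Finset.univ.sup' (Finset.univ_nonempty_iff.mpr
        (Fin.pos_iff_nonempty.mp hn)) (fun i => (e i) ^ 2)) :
    (∃! β : ℝ, m β = t) ∧
    (∃! β : ℝ, t * ∑ i, Real.exp (-β * (e i) ^ 2)
        = ∑ i, (e i) ^ 2 * Real.exp (-β * (e i) ^ 2)) := by
  have hne' : (Finset.univ : Finset (Fin n)).Nonempty :=
    Finset.univ_nonempty_iff.mpr (Fin.pos_iff_nonempty.mp hn)
  set a : Fin n → ℝ := fun i => (e i) ^ 2 - t with ha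
  set g : ℝ → ℝ := fun β => ∑ i, a i * Real.exp (-β * a i) with hg
  -- indices attaining max and min
  obtain ⟨j, -, hj⟩ := Finset.exists_mem_eq_sup' hne' (fun i => (e i) ^ 2)
  obtain ⟨k, -, hk⟩ := Finset.exists_mem_eq_inf' hne' (fun i => (e i) ^ 2)
  have haj : 0 < a j := by
    have : t < (e j) ^ 2 := hj ▸ htmax
    simp only [ha]; linarith
  have hak : a k < 0 := by
    have : (e k) ^ 2 < t := hk ▸ htmin
    simp only [ha]; linarith
  -- derivative of g
  have hderiv : ∀ β, HasDerivAt g (∑ i, -(a i) ^ 2 * Real.exp (-β * a i)) β := by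
    intro β
    have hterm : ∀ i ∈ Finset.univ, HasDerivAt
        (fun β : ℝ => a i * Real.exp (-β * a i))
        (-(a i) ^ 2 * Real.exp (-β * a i)) β := by
      intro i _
      have h1 : HasDerivAt (fun β : ℝ => -β * a i) (-a i) β := by
        simpa using (hasDerivAt_id β).neg.mul_const (a i)
      have h2 := (Real.hasDerivAt_exp (-β * a i)).comp β h1
      have h3 := h2.const_mul (a i)
      exact h3.congr_deriv (by ring)
    exact HasDerivAt.fun_sum hterm
  have hdiff : Differentiable ℝ g := fun β => (hderiv β).differentiableAt
  -- g is strictly decreasing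
  have hanti : StrictAnti g := by
    apply strictAnti_of_deriv_neg
    intro β
    rw [(hderiv β).deriv]
    calc (∑ i, -(a i) ^ 2 * Real.exp (-β * a i)) < ∑ _i : Fin n, (0 : ℝ) := by
          apply Finset.sum_lt_sum
          · intro i _
            have h1 : -(a i) ^ 2 ≤ 0 := neg_nonpos.mpr (sq_nonneg _)
            exact mul_nonpos_of_nonpos_of_nonneg h1 (Real.exp_pos _).le
          · exact ⟨j, Finset.mem_univ j,
              mul_neg_of_neg_of_pos (by nlinarith) (Real.exp_pos _)⟩
      _ = 0 := Finset.sum_const_zero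
  set C : ℝ := ∑ i, |a i| with hC
  have hCj : |a j| ≤ C := Finset.single_le_sum (f := fun i => |a i|) (fun i _ => abs_nonneg _) (Finset.mem_univ j)
  have hCk : |a k| ≤ C := Finset.single_le_sum (f := fun i => |a i|) (fun i _ => abs_nonneg _) (Finset.mem_univ k)
  have hC0 : 0 ≤ C := Finset.sum_nonneg fun i _ => abs_nonneg _
  -- point where g is positive
  set β₁ : ℝ := -(Real.log (C / a j + 1)) / a j with hβ₁def
  have harg1 : (1 : ℝ) ≤ C / a j + 1 := by
    have : 0 ≤ C / a j := div_nonneg hC0 haj.le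
    linarith
  have hβ₁ : β₁ ≤ 0 := by
    apply div_nonpos_of_nonpos_of_nonneg _ haj.le
    simpa using Real.log_nonneg harg1
  have hexp1 : Real.exp (-β₁ * a j) = C / a j + 1 := by
    have : -β₁ * a j = Real.log (C / a j + 1) := by
      rw [hβ₁def, neg_mul, div_mul_cancel₀ _ haj.ne', neg_neg]
    rw [this, Real.exp_log (by linarith)]
  have hgβ₁ : 0 < g β₁ := by
    have hsplit : g β₁ = a j * Real.exp (-β₁ * a j) +
        ∑ i ∈ Finset.univ.erase j, a i * Real.exp (-β₁ * a i) :=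
      (Finset.add_sum_erase _ _ (Finset.mem_univ j)).symm
    have hrest : -(∑ i ∈ Finset.univ.erase j, |a i|) ≤
        ∑ i ∈ Finset.univ.erase j, a i * Real.exp (-β₁ * a i) := by
      rw [← Finset.sum_neg_distrib]
      exact Finset.sum_le_sum fun i _ => gibbs_aux_lower β₁ (a i) hβ₁
    have hCsplit : |a j| + ∑ i ∈ Finset.univ.erase j, |a i| = C :=
      Finset.add_sum_erase _ (fun i => |a i|) (Finset.mem_univ j)
    have hjterm : a j * Real.exp (-β₁ * a j) = C + a j := by
      rw [hexp1]; field_simp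
    have habsj : |a j| = a j := abs_of_pos haj
    rw [hsplit, hjterm]
    linarith
  -- point where g is negative
  set β₂ : ℝ := Real.log (C / (-a k) + 1) / (-a k) with hβ₂def
  have hnak : 0 < -a k := by linarith
  have harg2 : (1 : ℝ) ≤ C / (-a k) + 1 := by
    have : 0 ≤ C / (-a k) := div_nonneg hC0 hnak.le
    linarith
  have hβ₂ : 0 ≤ β₂ := div_nonneg (Real.log_nonneg harg2) hnak.le
  have hexp2 : Real.exp (-β₂ * a k) = C / (-a k) + 1 := by
    have : -β₂ * a k = Real.log (C / (-a k) + 1) := by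
      rw [hβ₂def]
      field_simp
      exact mul_div_cancel_left₀ _ hak.ne
    rw [this, Real.exp_log (by linarith)]
  have hgβ₂ : g β₂ < 0 := by
    have hsplit : g β₂ = a k * Real.exp (-β₂ * a k) +
        ∑ i ∈ Finset.univ.erase k, a i * Real.exp (-β₂ * a i) :=
      (Finset.add_sum_erase _ _ (Finset.mem_univ k)).symm
    have hrest : ∑ i ∈ Finset.univ.erase k, a i * Real.exp (-β₂ * a i) ≤
        ∑ i ∈ Finset.univ.erase k, |a i| :=
      Finset.sum_le_sum fun i _ => gibbs_aux_upper β₂ (a i) hβ₂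
    have hCsplit : |a k| + ∑ i ∈ Finset.univ.erase k, |a i| = C :=
      Finset.add_sum_erase _ (fun i => |a i|) (Finset.mem_univ k)
    have hkterm : a k * Real.exp (-β₂ * a k) = -C + a k := by
      rw [hexp2]; field_simp; rw [mul_add, mul_neg, mul_div_assoc', mul_div_cancel_left₀ _ hak.ne, mul_one]
    have habsk : |a k| = -a k := abs_of_neg hak
    rw [hsplit, hkterm]
    linarith
  -- existence of a root via IVT
  have hle : β₁ ≤ β₂ := le_trans hβ₁ hβ₂
  have hmem : (0 : ℝ) ∈ Set.Icc (g β₂) (g β₁) := ⟨hgβ₂.le, hgβ₁.le⟩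
  obtain ⟨β₀, -, hβ₀⟩ := intermediate_value_Icc' hle hdiff.continuous.continuousOn hmem
  have huniq : ∀ y : ℝ, g y = 0 → y = β₀ := by
    intro y hy
    exact hanti.injective (hy.trans hβ₀.symm)
  -- bridging: g β = exp(βt) * (N β - t * S β)
  have hgform : ∀ β, g β = Real.exp (β * t) *
      ((∑ i, (e i) ^ 2 * Real.exp (-β * (e i) ^ 2)) -
        t * ∑ i, Real.exp (-β * (e i) ^ 2)) := by
    intro β
    have : g β = ∑ i, Real.exp (β * t) *
        ((e i) ^ 2 * Real.exp (-β * (e i) ^ 2) - t * Real.exp (-β * (e i) ^ 2)) := by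
      apply Finset.sum_congr rfl
      intro i _
      simp only [ha]
      rw [show -β * ((e i) ^ 2 - t) = -β * (e i) ^ 2 + β * t by ring, Real.exp_add]
      ring
    rw [this, ← Finset.mul_sum, Finset.sum_sub_distrib, ← Finset.mul_sum]
  have hSpos : ∀ β, 0 < ∑ i, Real.exp (-β * (e i) ^ 2) := fun β =>
    Finset.sum_pos (fun i _ => Real.exp_pos _) hne'
  have hiff1 : ∀ β, m β = t ↔ g β = 0 := by
    intro β
    rw [hm β, hgform β, div_eq_iff (hSpos β).ne', mul_eq_zero, sub_eq_zero]
    constructor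
    · intro h; right; rw [h]
    · rintro (h | h)
      · exact absurd h (Real.exp_ne_zero _)
      · rw [h]
  have hiff2 : ∀ β, (t * ∑ i, Real.exp (-β * (e i) ^ 2)
      = ∑ i, (e i) ^ 2 * Real.exp (-β * (e i) ^ 2)) ↔ g β = 0 := by
    intro β
    rw [hgform β, mul_eq_zero, sub_eq_zero]
    constructor
    · intro h; right; rw [h]
    · rintro (h | h)
      · exact absurd h (Real.exp_ne_zero _)
      · rw [h]
  exact ⟨⟨β₀, (hiff1 β₀).mpr hβ₀, fun y hy => huniq y ((hiff1 y).mp hy)⟩,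
    ⟨β₀, (hiff2 β₀).mpr hβ₀, fun y hy => huniq y ((hiff2 y).mp hy)⟩⟩
end

section
/- Entropy of the Gibbs weights is strictly decreasing for positive β: let n ≥ 1 and e : Fin n → ℝ be such that the squared errors e_i² are not all equal. Let Q(β) = Σ_j exp(-β e_j²), p_i(β) = exp(-β e_i²)/Q(β), and H(β) = -Σ_i p_i(β) ln p_i(β). Then H is strictly decreasing on the interval (0, ∞) (and strictly increasing on (-∞, 0)); in particular H(β) < H(0) = ln n for every β ≠ 0. -/
/-- Entropy of the Gibbs weights is strictly decreasing for positive `β`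
(and strictly increasing for negative `β`): if the squared errors are not all
equal, then `H` is strictly antitone on `(0, ∞)`, strictly monotone on
`(-∞, 0)`, and `H β < H 0 = ln n` for every `β ≠ 0`. -/
theorem gibbs_entropy_strict_monotonicity
    (n : ℕ) (hn : 1 ≤ n) (e : Fin n → ℝ)
    (hne : ∃ i j, (e i) ^ 2 ≠ (e j) ^ 2)
    (Q : ℝ → ℝ) (hQ : ∀ β, Q β = ∑ j, Real.exp (-β * (e j) ^ 2))
    (p : ℝ → Fin n → ℝ) (hp : ∀ β i, p β i = Real.exp (-β * (e i) ^ 2) / Q β)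
    (H : ℝ → ℝ) (hH : ∀ β, H β = -∑ i, p β i * Real.log (p β i)) :
    StrictAntiOn H (Set.Ioi 0) ∧ StrictMonoOn H (Set.Iio 0) ∧
    H 0 = Real.log n ∧ (∀ β : ℝ, β ≠ 0 → H β < H 0) := by
  obtain ⟨i₀, j₀, hij⟩ := hne
  have hn0 : 0 < n := hn
  set Qf : ℝ → ℝ := fun β => ∑ j, Real.exp (-β * (e j) ^ 2) with hQf
  set Q1 : ℝ → ℝ := fun β => ∑ j, -(e j) ^ 2 * Real.exp (-β * (e j) ^ 2) with hQ1
  set Q2 : ℝ → ℝ := fun β => ∑ j, ((e j) ^ 2) ^ 2 * Real.exp (-β * (e j) ^ 2) with hQ2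
  set F : ℝ → ℝ := fun β => Q1 β / Qf β with hF
  have hQQf : ∀ β, Q β = Qf β := fun β => by simp only [hQ, hQf]
  have hQfpos : ∀ β, 0 < Qf β := by
    intro β
    simp only [hQf]
    exact Finset.sum_pos (fun j _ => Real.exp_pos _) ⟨⟨0, hn0⟩, Finset.mem_univ _⟩
  have hQfd : ∀ β, HasDerivAt Qf (Q1 β) β := by
    intro β
    simp only [hQf, hQ1]
    apply HasDerivAt.fun_sum
    intro j _
    have h1 : HasDerivAt (fun b : ℝ => -b * (e j) ^ 2) (-(e j) ^ 2) β := by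
      simpa using (hasDerivAt_id β).neg.mul_const ((e j) ^ 2)
    simpa [mul_comm] using h1.exp
  have hQ1d : ∀ β, HasDerivAt Q1 (Q2 β) β := by
    intro β
    simp only [hQ1, hQ2]
    apply HasDerivAt.fun_sum
    intro j _
    have h1 : HasDerivAt (fun b : ℝ => -b * (e j) ^ 2) (-(e j) ^ 2) β := by
      simpa using (hasDerivAt_id β).neg.mul_const ((e j) ^ 2)
    have h2 := h1.exp.const_mul (-(e j) ^ 2)
    convert h2 using 1
    · rfl
    ring
  have hFd : ∀ β, HasDerivAt F ((Q2 β * Qf β - Q1 β * Q1 β) / (Qf β) ^ 2) β := by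
    intro β
    have := (hQ1d β).div (hQfd β) (hQfpos β).ne'
    exact this
  -- variance positivity
  have hvar : ∀ β, 0 < Q2 β * Qf β - Q1 β * Q1 β := by
    intro β
    set b : Fin n → ℝ := fun j => Real.exp (-β * (e j) ^ 2) with hb
    have hmul1 : Q2 β * Qf β = ∑ i, ∑ j, ((e i) ^ 2) ^ 2 * b i * b j := by
      simp only [hQ2, hQf, ← hb]
      rw [Finset.sum_mul_sum]
    have hmul2 : Q1 β * Q1 β = ∑ i, ∑ j, ((e i) ^ 2 * b i) * ((e j) ^ 2 * b j) := by
      have hneg : Q1 β = -∑ j, (e j) ^ 2 * b j := by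
        simp only [hQ1, hb]
        rw [← Finset.sum_neg_distrib]
        exact Finset.sum_congr rfl fun j _ => by ring
      rw [hneg, neg_mul_neg, Finset.sum_mul_sum]
    have hanti : ∑ i, ∑ j, (((e i) ^ 2) ^ 2 - ((e j) ^ 2) ^ 2) * (b i * b j) = 0 := by
      have h1 := Finset.sum_comm (s := Finset.univ) (t := Finset.univ)
        (f := fun i j : Fin n => (((e i) ^ 2) ^ 2 - ((e j) ^ 2) ^ 2) * (b i * b j))
      have h3 : (∑ x, ∑ y, (((e y) ^ 2) ^ 2 - ((e x) ^ 2) ^ 2) * (b y * b x))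
          = -∑ x, ∑ y, (((e x) ^ 2) ^ 2 - ((e y) ^ 2) ^ 2) * (b x * b y) := by
        rw [← Finset.sum_neg_distrib]
        refine Finset.sum_congr rfl fun x _ => ?_
        rw [← Finset.sum_neg_distrib]
        exact Finset.sum_congr rfl fun y _ => by ring
      rw [h1] at h3
      linarith [h3]
    have key : 2 * (Q2 β * Qf β - Q1 β * Q1 β)
        = ∑ i, ∑ j, ((e i) ^ 2 - (e j) ^ 2) ^ 2 * (b i * b j) := by
      rw [hmul1, hmul2]
      have step : ∀ i j : Fin n,
          2 * (((e i) ^ 2) ^ 2 * b i * b j - ((e i) ^ 2 * b i) * ((e j) ^ 2 * b j))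
          = ((e i) ^ 2 - (e j) ^ 2) ^ 2 * (b i * b j)
            + ((((e i) ^ 2) ^ 2 - ((e j) ^ 2) ^ 2) * (b i * b j)) := fun i j => by ring
      calc 2 * ((∑ i, ∑ j, ((e i) ^ 2) ^ 2 * b i * b j)
            - ∑ i, ∑ j, ((e i) ^ 2 * b i) * ((e j) ^ 2 * b j))
          = ∑ i, ∑ j, (((e i) ^ 2 - (e j) ^ 2) ^ 2 * (b i * b j)
              + ((((e i) ^ 2) ^ 2 - ((e j) ^ 2) ^ 2) * (b i * b j))) := by
            rw [← Finset.sum_sub_distrib, Finset.mul_sum]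
            refine Finset.sum_congr rfl fun i _ => ?_
            rw [← Finset.sum_sub_distrib, Finset.mul_sum]
            exact Finset.sum_congr rfl fun j _ => step i j
        _ = (∑ i, ∑ j, ((e i) ^ 2 - (e j) ^ 2) ^ 2 * (b i * b j))
              + ∑ i, ∑ j, (((e i) ^ 2) ^ 2 - ((e j) ^ 2) ^ 2) * (b i * b j) := by
            rw [← Finset.sum_add_distrib]
            exact Finset.sum_congr rfl fun i _ => Finset.sum_add_distrib
        _ = ∑ i, ∑ j, ((e i) ^ 2 - (e j) ^ 2) ^ 2 * (b i * b j) := by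
            rw [hanti, add_zero]
    have hpos : 0 < ∑ i, ∑ j, ((e i) ^ 2 - (e j) ^ 2) ^ 2 * (b i * b j) := by
      refine Finset.sum_pos' (fun i _ => Finset.sum_nonneg fun j _ => by positivity) ?_
      refine ⟨i₀, Finset.mem_univ _, ?_⟩
      refine Finset.sum_pos' (fun j _ => by positivity) ⟨j₀, Finset.mem_univ _, ?_⟩
      have : (e i₀) ^ 2 - (e j₀) ^ 2 ≠ 0 := sub_ne_zero.mpr hij
      have hb0 : 0 < b i₀ * b j₀ := by simp only [hb]; positivity
      positivity
    linarith
  have hFmono : StrictMono F :=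
    strictMono_of_hasDerivAt_pos hFd fun β =>
      div_pos (hvar β) (pow_pos (hQfpos β) 2)
  -- entropy formula: H β = log (Qf β) - β * F β
  have hHf : ∀ β, H β = Real.log (Qf β) - β * F β := by
    intro β
    have hs : ∑ i, Real.exp (-β * (e i) ^ 2) = Qf β := by simp only [hQf]
    have hsum1 : ∑ i, p β i = 1 := by
      simp only [hp, hQQf]
      rw [← Finset.sum_div, hs, div_self (hQfpos β).ne']
    have hlog : ∀ i, Real.log (p β i) = -β * (e i) ^ 2 - Real.log (Qf β) := by
      intro i
      rw [hp, hQQf, Real.log_div (Real.exp_pos _).ne' (hQfpos β).ne', Real.log_exp]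
    have hsum2 : ∑ i, (e i) ^ 2 * p β i = -F β := by
      simp only [hp, hQQf]
      have : ∀ i : Fin n, (e i) ^ 2 * (Real.exp (-β * (e i) ^ 2) / Qf β)
          = ((e i) ^ 2 * Real.exp (-β * (e i) ^ 2)) / Qf β := fun i => by ring
      rw [Finset.sum_congr rfl fun i _ => this i, ← Finset.sum_div]
      have hneg : -(Q1 β) = ∑ j, (e j) ^ 2 * Real.exp (-β * (e j) ^ 2) := by
        simp only [hQ1, neg_mul, Finset.sum_neg_distrib, neg_neg]
      rw [hF]
      rw [← hneg]
      field_simp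
    rw [hH]
    calc -∑ i, p β i * Real.log (p β i)
        = -∑ i, p β i * (-β * (e i) ^ 2 - Real.log (Qf β)) := by
          congr 1
          exact Finset.sum_congr rfl fun i _ => by rw [hlog i]
      _ = β * (∑ i, (e i) ^ 2 * p β i) + Real.log (Qf β) * (∑ i, p β i) := by
          rw [Finset.mul_sum, Finset.mul_sum, ← Finset.sum_add_distrib,
            ← Finset.sum_neg_distrib]
          exact Finset.sum_congr rfl fun i _ => by ring
      _ = β * (-F β) + Real.log (Qf β) * 1 := by rw [hsum1, hsum2]
      _ = Real.log (Qf β) - β * F β := by ring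
  have hQf0 : Qf 0 = n := by simp [hQf]
  have hH0 : H 0 = Real.log n := by rw [hHf 0, hQf0]; ring
  -- mean value / convexity arguments
  have hfd : ∀ β : ℝ, HasDerivAt (fun x => Real.log (Qf x)) (F β) β := by
    intro β
    have := (hQfd β).log (hQfpos β).ne'
    simpa [hF] using this
  have main1 : ∀ β₁ β₂ : ℝ, β₁ < β₂ → 0 ≤ β₁ → H β₂ < H β₁ := by
    intro β₁ β₂ hlt h0
    obtain ⟨c, hc, hceq⟩ := exists_hasDerivAt_eq_slope (fun x => Real.log (Qf x)) F hlt
      (fun x _ => (hfd x).continuousAt.continuousWithinAt) (fun x _ => hfd x)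
    have hd : β₂ - β₁ ≠ 0 := sub_ne_zero.mpr hlt.ne'
    have h1 : Real.log (Qf β₂) - Real.log (Qf β₁) = F c * (β₂ - β₁) := by
      rw [hceq]; field_simp
    have h2 : F c < F β₂ := hFmono hc.2
    have h3 : F β₁ < F β₂ := hFmono hlt
    rw [hHf, hHf]
    nlinarith [h1, h2, h3, hlt, h0]
  have main2 : ∀ β₁ β₂ : ℝ, β₁ < β₂ → β₂ ≤ 0 → H β₁ < H β₂ := by
    intro β₁ β₂ hlt h0
    obtain ⟨c, hc, hceq⟩ := exists_hasDerivAt_eq_slope (fun x => Real.log (Qf x)) F hlt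
      (fun x _ => (hfd x).continuousAt.continuousWithinAt) (fun x _ => hfd x)
    have hd : β₂ - β₁ ≠ 0 := sub_ne_zero.mpr hlt.ne'
    have h1 : Real.log (Qf β₂) - Real.log (Qf β₁) = F c * (β₂ - β₁) := by
      rw [hceq]; field_simp
    have h2 : F β₁ < F c := hFmono hc.1
    have h3 : F β₁ < F β₂ := hFmono hlt
    rw [hHf, hHf]
    nlinarith [h1, h2, h3, hlt, h0]
  refine ⟨?_, ?_, hH0, ?_⟩
  · intro x hx y hy hxy
    exact main1 x y hxy (le_of_lt hx)
  · intro x hx y hy hxy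
    exact main2 x y hxy (le_of_lt hy)
  · intro β hβ
    rcases lt_or_gt_of_ne hβ with h | h
    · exact main2 β 0 h le_rfl
    · exact main1 0 β h le_rfl
end
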